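/- Let ℓ be a prime, A a finite abelian ℓ-group with ℓ-rank r and ℓ²-rank s, and for i ≥ 0 let A_{⊕i} = A ⊕ (Z/ℓ)^i. Then |Λ(A_{⊕i})| = ℓ^{ir + i(i−1)/2} · |Λ(A)|, where Λ(B) is the set of alternating bilinear forms on B as a Z/exp(B)-module. -/

import Mathlib

namespace LamAux

variable {B C M : Type*} [AddCommGroup B] [AddCommGroup C] [AddCommGroup M]

/-- alternating biadditive form condition -/
def AltCond (f : B → B → M) : Prop :=
  (∀ x y z, f (x + y) z = f x z + f y z) ∧
  (∀ x y z, f x (y + z) = f x y + f x z) ∧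
  (∀ x, f x x = 0)

/-- biadditive condition -/
def BiCond (f : B → C → M) : Prop :=
  (∀ x y z, f (x + y) z = f x z + f y z) ∧
  (∀ x y z, f x (y + z) = f x y + f x z)

theorem BiCond.zero_left {f : B → C → M} (h : BiCond f) (c : C) : f 0 c = 0 := by
  have := h.1 0 0 c; simpa using this.symm

theorem BiCond.zero_right {f : B → C → M} (h : BiCond f) (b : B) : f b 0 = 0 := by
  have := h.2 b 0 0; simpa using this.symm

theorem BiCond.nsmul_left {f : B → C → M} (h : BiCond f) (n : ℕ) (b : B) (c : C) :
    f (n • b) c = n • f b c := by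
  induction n with
  | zero => simpa using h.zero_left c
  | succ k ih => rw [succ_nsmul, succ_nsmul, h.1, ih]

theorem BiCond.nsmul_right {f : B → C → M} (h : BiCond f) (n : ℕ) (b : B) (c : C) :
    f b (n • c) = n • f b c := by
  induction n with
  | zero => simpa using h.zero_right b
  | succ k ih => rw [succ_nsmul, succ_nsmul, h.2, ih]

theorem AltCond.bi {f : B → B → M} (h : AltCond f) : BiCond f := ⟨h.1, h.2.1⟩

theorem AltCond.skew {f : B → B → M} (h : AltCond f) (x y : B) : f y x = - f x y := by
  have e : f (x + y) (x + y) = 0 := h.2.2 _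
  rw [h.1, h.2.1, h.2.1, h.2.2, h.2.2] at e
  -- e : 0 + f x y + (f y x + 0) = 0
  rw [eq_neg_iff_add_eq_zero]
  linear_combination (norm := abel) e

/-- Decomposition of alternating forms on a product. -/
noncomputable def altProdEquiv :
    {f : B × C → B × C → M // AltCond f} ≃
      {g : B → B → M // AltCond g} × {p : B → C → M // BiCond p} ×
        {h : C → C → M // AltCond h} where
  toFun f :=
    ⟨⟨fun b b' => f.1 (b, 0) (b', 0), by
        obtain ⟨f, h1, h2, h3⟩ := f
        refine ⟨fun x y z => ?_, fun x y z => ?_, fun x => h3 _⟩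
        · have := h1 (x, 0) (y, 0) (z, 0); simpa using this
        · have := h2 (x, 0) (y, 0) (z, 0); simpa using this⟩,
     ⟨fun b c => f.1 (b, 0) (0, c), by
        obtain ⟨f, h1, h2, h3⟩ := f
        refine ⟨fun x y z => ?_, fun x y z => ?_⟩
        · have := h1 (x, 0) (y, 0) (0, z); simpa using this
        · have := h2 (x, 0) (0, y) (0, z); simpa using this⟩,
     ⟨fun c c' => f.1 (0, c) (0, c'), by
        obtain ⟨f, h1, h2, h3⟩ := f
        refine ⟨fun x y z => ?_, fun x y z => ?_, fun x => h3 _⟩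
        · have := h1 (0, x) (0, y) (0, z); simpa using this
        · have := h2 (0, x) (0, y) (0, z); simpa using this⟩⟩
  invFun ghp :=
    ⟨fun x y => ghp.1.1 x.1 y.1 + ghp.2.1.1 x.1 y.2 - ghp.2.1.1 y.1 x.2 + ghp.2.2.1 x.2 y.2, by
      obtain ⟨⟨g, hg⟩, ⟨p, hp⟩, ⟨h, hh⟩⟩ := ghp
      refine ⟨fun x y z => ?_, fun x y z => ?_, fun x => ?_⟩
      · simp only [Prod.fst_add, Prod.snd_add, hg.1, hp.1, hp.2, hh.1]
        abel
      · simp only [Prod.fst_add, Prod.snd_add, hg.2.1, hp.2, hp.1, hh.2.1]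
        abel
      · simp only [hg.2.2, hh.2.2]
        abel⟩
  left_inv := by
    rintro ⟨f, hf⟩
    apply Subtype.ext
    funext x y
    simp only
    have hx : x = (x.1, 0) + (0, x.2) := by simp
    have hy : y = (y.1, 0) + (0, y.2) := by simp
    have hb : BiCond f := hf.bi
    conv_rhs => rw [hx, hy]
    rw [hb.1, hb.2, hb.2]
    have : f (0, x.2) (y.1, 0) = - f (y.1, 0) (0, x.2) := hf.skew _ _
    rw [this]
    abel
  right_inv := by
    rintro ⟨⟨g, hg⟩, ⟨p, hp⟩, ⟨h, hh⟩⟩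
    refine Prod.ext (Subtype.ext ?_) (Prod.ext (Subtype.ext ?_) (Subtype.ext ?_)) <;>
      funext u v <;> simp only
    · rw [hp.zero_right, hp.zero_right, hh.2.2]; abel
    · rw [(hg.bi).zero_right, hp.zero_left, (hh.bi).zero_left]; abel
    · rw [hp.zero_left, hp.zero_left, (hg.bi).zero_left]
      abel


variable {n : ℕ}

theorem mod_nsmul {c : M} (hc : n • c = 0) (m : ℕ) : (m % n) • c = m • c := by
  conv_rhs => rw [← Nat.mod_add_div m n]
  have h2 : (n * (m / n)) • c = (m / n) • n • c := mul_nsmul c n (m / n)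
  rw [add_nsmul, h2, hc, nsmul_zero, add_zero]

theorem nsmul_zmod_self (n : ℕ) (x : ZMod n) : n • x = 0 := by
  have : (n : ZMod n) = 0 := ZMod.natCast_self n
  calc n • x = (n : ZMod n) * x := by rw [nsmul_eq_mul]
  _ = 0 := by rw [this, zero_mul]

theorem val_smul_one [NeZero n] (x : ZMod n) : x.val • (1 : ZMod n) = x := by
  rw [nsmul_eq_mul, mul_one, ZMod.natCast_val, ZMod.cast_id]

/-- alternating forms on a cyclic group vanish -/
theorem altCond_zmod_eq_zero [NeZero n] {f : ZMod n → ZMod n → M} (hf : AltCond f)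
    (x y : ZMod n) : f x y = 0 := by
  have hb : BiCond f := hf.bi
  have hx : f x y = x.val • f 1 y := by
    conv_lhs => rw [← val_smul_one x]
    rw [hb.nsmul_left]
  have hy : f 1 y = y.val • f 1 1 := by
    conv_lhs => rw [← val_smul_one y]
    rw [hb.nsmul_right]
  rw [hx, hy, hf.2.2, nsmul_zero, nsmul_zero]

theorem card_altCond_zmod [NeZero n] :
    Nat.card {f : ZMod n → ZMod n → M // AltCond f} = 1 := by
  have : ∀ f : {f : ZMod n → ZMod n → M // AltCond f},
      f = ⟨fun _ _ => 0, by refine ⟨?_, ?_, ?_⟩ <;> simp⟩ := by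
    rintro ⟨f, hf⟩
    exact Subtype.ext (funext fun x => funext fun y => altCond_zmod_eq_zero hf x y)
  haveI : Unique {f : ZMod n → ZMod n → M // AltCond f} :=
    ⟨⟨⟨fun _ _ => 0, by refine ⟨?_, ?_, ?_⟩ <;> simp⟩⟩, this⟩
  exact Nat.card_unique

/-- biadditive maps `B × ZMod n → M` are `n`-torsion homs -/
noncomputable def biCondZModEquiv [NeZero n] :
    {p : B → ZMod n → M // BiCond p} ≃ {g : B →+ M // ∀ b, n • g b = 0} where
  toFun p :=
    ⟨AddMonoidHom.mk' (fun b => p.1 b 1) (fun a b => p.2.1 a b 1), by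
      intro b
      have h1 : p.1 b (n • (1 : ZMod n)) = n • p.1 b 1 := p.2.nsmul_right n b 1
      rw [AddMonoidHom.mk'_apply, ← h1, nsmul_zmod_self, p.2.zero_right]⟩
  invFun g :=
    ⟨fun b c => c.val • g.1 b, by
      constructor
      · intro x y z
        show z.val • g.1 (x + y) = z.val • g.1 x + z.val • g.1 y
        rw [map_add, nsmul_add]
      · intro x y z
        show (y + z).val • g.1 x = y.val • g.1 x + z.val • g.1 x
        rw [ZMod.val_add, mod_nsmul (g.2 x), add_nsmul]⟩
  left_inv p := by
    apply Subtype.ext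
    funext b c
    show c.val • p.1 b 1 = p.1 b c
    rw [← p.2.nsmul_right, val_smul_one]
  right_inv g := by
    apply Subtype.ext
    apply AddMonoidHom.ext
    intro b
    show (1 : ZMod n).val • g.1 b = g.1 b
    have h1 : (1 : ZMod n).val = 1 % n := ZMod.val_one_eq_one_mod n
    rw [h1, mod_nsmul (g.2 b), one_nsmul]

section embed

theorem ell_smul_cast (ℓ N : ℕ) (hdvd : ℓ ∣ N) : ℓ • ((N / ℓ : ℕ) : ZMod N) = 0 := by
  have h1 : ℓ • ((N / ℓ : ℕ) : ZMod N) = ((ℓ * (N / ℓ) : ℕ) : ZMod N) := by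
    push_cast
    rw [nsmul_eq_mul]
  rw [h1, Nat.mul_div_cancel' hdvd, ZMod.natCast_self]

/-- the embedding `ZMod ℓ →+ ZMod N` -/
noncomputable def embed (ℓ N : ℕ) [NeZero ℓ] (hdvd : ℓ ∣ N) : ZMod ℓ →+ ZMod N :=
  AddMonoidHom.mk' (fun x => x.val • ((N / ℓ : ℕ) : ZMod N)) (by
    intro a b
    show (a + b).val • _ = a.val • _ + b.val • _
    rw [ZMod.val_add, mod_nsmul (ell_smul_cast ℓ N hdvd), add_nsmul])

theorem embed_apply (ℓ N : ℕ) [NeZero ℓ] (hdvd : ℓ ∣ N) (x : ZMod ℓ) :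
    embed ℓ N hdvd x = ((x.val * (N / ℓ) : ℕ) : ZMod N) := by
  show x.val • ((N / ℓ : ℕ) : ZMod N) = _
  push_cast
  rw [nsmul_eq_mul]

theorem embed_injective (ℓ N : ℕ) [NeZero ℓ] (hN : N ≠ 0) (hdvd : ℓ ∣ N) :
    Function.Injective (embed ℓ N hdvd) := by
  haveI : NeZero N := ⟨hN⟩
  rw [injective_iff_map_eq_zero]
  intro x hx
  rw [embed_apply, ZMod.natCast_eq_zero_iff] at hx
  obtain ⟨m, hm⟩ := hdvd
  have hm0 : 0 < m := by
    rcases Nat.eq_zero_or_pos m with h | h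
    · exact absurd (by rw [hm, h, mul_zero]) hN
    · exact h
  rw [hm, Nat.mul_div_cancel_left m (Nat.pos_of_ne_zero (NeZero.ne ℓ))] at hx
  have hdx : ℓ ∣ x.val := (Nat.mul_dvd_mul_iff_right hm0).mp hx
  have hlt : x.val < ℓ := ZMod.val_lt x
  have hv : x.val = 0 := by
    rcases hdx with ⟨t, ht⟩
    rcases Nat.eq_zero_or_pos t with h | h
    · rw [h, mul_zero] at ht; exact ht
    · exfalso
      have h2 : ℓ * 1 ≤ ℓ * t := Nat.mul_le_mul_left ℓ h
      rw [mul_one] at h2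
      linarith
  exact (ZMod.val_eq_zero x).mp hv

theorem embed_surj_torsion (ℓ N : ℕ) [NeZero ℓ] (hN : N ≠ 0) (hdvd : ℓ ∣ N)
    (y : ZMod N) (hy : ℓ • y = 0) :
    ∃ x : ZMod ℓ, embed ℓ N hdvd x = y := by
  haveI : NeZero N := ⟨hN⟩
  obtain ⟨m, hm⟩ := hdvd
  have hm0 : 0 < m := by
    rcases Nat.eq_zero_or_pos m with h | h
    · exact absurd (by rw [hm, h, mul_zero]) hN
    · exact h
  have h1 : ((ℓ * y.val : ℕ) : ZMod N) = 0 := by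
    have hc : ((y.val : ℕ) : ZMod N) = y := ZMod.natCast_rightInverse y
    rw [Nat.cast_mul, hc, ← nsmul_eq_mul, hy]
  rw [ZMod.natCast_eq_zero_iff] at h1
  have h1' : ℓ * m ∣ ℓ * y.val := by rw [← hm]; exact h1
  have hdy : m ∣ y.val := (Nat.mul_dvd_mul_iff_left (Nat.pos_of_ne_zero (NeZero.ne ℓ))).mp h1'
  obtain ⟨k, hk⟩ := hdy
  have hklt : k < ℓ := by
    have hvlt : m * k < ℓ * m := by rw [← hk, ← hm]; exact ZMod.val_lt y
    by_contra h
    push_neg at h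
    have h3 : ℓ * m ≤ m * k := by
      calc ℓ * m ≤ k * m := Nat.mul_le_mul_right m h
        _ = m * k := mul_comm _ _
    linarith
  refine ⟨(k : ZMod ℓ), ?_⟩
  have hNd : N / ℓ = m := by rw [hm, Nat.mul_div_cancel_left m (Nat.pos_of_ne_zero (NeZero.ne ℓ))]
  rw [embed_apply, ZMod.val_natCast_of_lt hklt, hNd, mul_comm k m, ← hk]
  exact ZMod.natCast_rightInverse y

end embed

section counting

variable {B : Type*} [AddCommGroup B]

theorem card_torsion_hom (ℓ N : ℕ) [NeZero ℓ] (hN : N ≠ 0) (hdvd : ℓ ∣ N) :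
    Nat.card {g : B →+ ZMod N // ∀ b, ℓ • g b = 0} = Nat.card (B →+ ZMod ℓ) := by
  symm
  apply Nat.card_eq_of_bijective
    (fun h => ⟨(embed ℓ N hdvd).comp h, fun b => by
      rw [AddMonoidHom.comp_apply, ← map_nsmul, nsmul_zmod_self, map_zero]⟩)
  constructor
  · intro h h' he
    have := congrArg Subtype.val he
    apply AddMonoidHom.ext
    intro b
    exact embed_injective ℓ N hN hdvd (congrFun (congrArg DFunLike.coe this) b)
  · rintro ⟨g, hg⟩
    have hch : ∀ b, ∃ x : ZMod ℓ, embed ℓ N hdvd x = g b := fun b =>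
      embed_surj_torsion ℓ N hN hdvd (g b) (hg b)
    choose h0 hh0 using hch
    refine ⟨AddMonoidHom.mk' h0 ?_, ?_⟩
    · intro a b
      apply embed_injective ℓ N hN hdvd
      rw [map_add, hh0, hh0, hh0, map_add]
    · apply Subtype.ext
      apply AddMonoidHom.ext
      intro b
      exact hh0 b

/-- duality: `|Hom(B, Z/ℓ)| = |B[ℓ]|` for finite abelian `B`. -/
theorem card_hom_zmod (ℓ : ℕ) (hℓ : ℓ.Prime) [Finite B] :
    Nat.card (B →+ ZMod ℓ) = Nat.card {b : B // ℓ • b = 0} := by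
  haveI : Fact ℓ.Prime := ⟨hℓ⟩
  haveI : NeZero ℓ := ⟨hℓ.ne_zero⟩
  set φ : B →+ B := AddMonoidHom.mk' (fun b => ℓ • b) (fun a b => nsmul_add a b ℓ) with hφ
  set R : AddSubgroup B := φ.range with hR
  -- card of kernel = card of torsion subtype
  have hker : Nat.card φ.ker = Nat.card {b : B // ℓ • b = 0} :=
    Nat.card_congr (Equiv.subtypeEquivRight (fun b => Iff.rfl))
  -- card (B ⧸ R) = card ker
  have hcard1 : Nat.card B = Nat.card (B ⧸ R) * Nat.card R :=
    AddSubgroup.card_eq_card_quotient_mul_card_addSubgroup R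
  have hcard2 : Nat.card (B ⧸ φ.ker) = Nat.card R :=
    Nat.card_congr (QuotientAddGroup.quotientKerEquivRange φ).toEquiv
  have hcard3 : Nat.card B = Nat.card R * Nat.card φ.ker := by
    rw [← hcard2, mul_comm]
    exact (AddSubgroup.card_eq_card_quotient_mul_card_addSubgroup φ.ker).trans (by ring)
  have hRpos : 0 < Nat.card R := Nat.card_pos
  have hQK : Nat.card (B ⧸ R) = Nat.card φ.ker := by
    have := hcard1.symm.trans hcard3
    -- Nat.card (B ⧸ R) * Nat.card R = Nat.card R * Nat.card φ.ker
    nlinarith [this]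
  -- Hom(B, ZMod ℓ) ≃card Hom(B ⧸ R, ZMod ℓ)
  have hzero : ∀ x ∈ R, ∀ (f : B →+ ZMod ℓ), f x = 0 := by
    rintro x ⟨b, rfl⟩ f
    show f (ℓ • b) = 0
    rw [map_nsmul, nsmul_zmod_self]
  have hHomQ : Nat.card ((B ⧸ R) →+ ZMod ℓ) = Nat.card (B →+ ZMod ℓ) := by
    apply Nat.card_eq_of_bijective (fun f => f.comp (QuotientAddGroup.mk' R))
    constructor
    · intro f f' he
      apply AddMonoidHom.ext
      intro q
      obtain ⟨b, rfl⟩ := QuotientAddGroup.mk'_surjective R q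
      exact congrFun (congrArg DFunLike.coe he) b
    · intro f
      refine ⟨QuotientAddGroup.lift R f (fun x hx => hzero x hx f), ?_⟩
      apply AddMonoidHom.ext
      intro b
      rfl
  -- module structure on Q := B ⧸ R
  haveI : Module (ZMod ℓ) (B ⧸ R) := QuotientAddGroup.zmodModule (fun x => ⟨x, rfl⟩)
  -- homs Q →+ ZMod ℓ are linear maps
  have hLin : Nat.card ((B ⧸ R) →+ ZMod ℓ) = Nat.card ((B ⧸ R) →ₗ[ZMod ℓ] ZMod ℓ) := by
    apply Nat.card_eq_of_bijective (fun f => f.toZModLinearMap ℓ)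
    constructor
    · exact AddMonoidHom.toZModLinearMap_injective ℓ
    · intro f
      exact ⟨f.toAddMonoidHom, by apply LinearMap.ext; intro q; rfl⟩
  -- dual has same cardinality
  haveI : Finite (B ⧸ R) := Quotient.finite _
  have hdual : Nat.card ((B ⧸ R) →ₗ[ZMod ℓ] ZMod ℓ) = Nat.card (B ⧸ R) := by
    haveI := Fintype.ofFinite (B ⧸ R)
    haveI : Finite ((B ⧸ R) →ₗ[ZMod ℓ] ZMod ℓ) :=
      Finite.of_injective (fun f => (f : (B ⧸ R) → ZMod ℓ)) DFunLike.coe_injective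
    haveI := Fintype.ofFinite ((B ⧸ R) →ₗ[ZMod ℓ] ZMod ℓ)
    rw [Nat.card_eq_fintype_card, Nat.card_eq_fintype_card]
    have h1 : Fintype.card (B ⧸ R) = (Fintype.card (ZMod ℓ)) ^ Module.finrank (ZMod ℓ) (B ⧸ R) :=
      Module.card_eq_pow_finrank
    have h2 : Fintype.card ((B ⧸ R) →ₗ[ZMod ℓ] ZMod ℓ) =
        (Fintype.card (ZMod ℓ)) ^ Module.finrank (ZMod ℓ) (Module.Dual (ZMod ℓ) (B ⧸ R)) :=
      Module.card_eq_pow_finrank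
    rw [h1, h2, Subspace.dual_finrank_eq]
  rw [← hHomQ, hLin, hdual, hQK, hker]

end counting

section step

theorem card_alt_step (B : Type*) [AddCommGroup B] [Finite B] (ℓ N : ℕ) (hℓ : ℓ.Prime)
    (hN : N ≠ 0) (hdvd : ℓ ∣ N) :
    Nat.card {f : B × ZMod ℓ → B × ZMod ℓ → ZMod N // AltCond f}
      = Nat.card {b : B // ℓ • b = 0} * Nat.card {f : B → B → ZMod N // AltCond f} := by
  haveI : NeZero ℓ := ⟨hℓ.ne_zero⟩
  rw [Nat.card_congr (altProdEquiv (B := B) (C := ZMod ℓ) (M := ZMod N)),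
    Nat.card_prod, Nat.card_prod,
    Nat.card_congr (biCondZModEquiv (B := B) (M := ZMod N) (n := ℓ)),
    card_torsion_hom ℓ N hN hdvd, card_hom_zmod ℓ hℓ,
    card_altCond_zmod]
  ring

/-- transport alternating forms along an additive equivalence -/
def altCongr {B B' M : Type*} [AddCommGroup B] [AddCommGroup B'] [AddCommGroup M]
    (e : B ≃+ B') : {f : B → B → M // AltCond f} ≃ {f : B' → B' → M // AltCond f} where
  toFun f := ⟨fun x y => f.1 (e.symm x) (e.symm y), by
    obtain ⟨f, h1, h2, h3⟩ := f
    refine ⟨fun x y z => ?_, fun x y z => ?_, fun x => h3 _⟩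
    · show f (e.symm (x + y)) (e.symm z) = f (e.symm x) (e.symm z) + f (e.symm y) (e.symm z)
      rw [map_add]; exact h1 _ _ _
    · show f (e.symm x) (e.symm (y + z)) = f (e.symm x) (e.symm y) + f (e.symm x) (e.symm z)
      rw [map_add]; exact h2 _ _ _⟩
  invFun f := ⟨fun x y => f.1 (e x) (e y), by
    obtain ⟨f, h1, h2, h3⟩ := f
    refine ⟨fun x y z => ?_, fun x y z => ?_, fun x => h3 _⟩
    · show f (e (x + y)) (e z) = f (e x) (e z) + f (e y) (e z)
      rw [map_add]; exact h1 _ _ _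
    · show f (e x) (e (y + z)) = f (e x) (e y) + f (e x) (e z)
      rw [map_add]; exact h2 _ _ _⟩
  left_inv f := Subtype.ext (funext fun x => funext fun y => by simp)
  right_inv f := Subtype.ext (funext fun x => funext fun y => by simp)

/-- transport torsion subtypes along an additive equivalence -/
def torsionCongr {B B' : Type*} [AddCommGroup B] [AddCommGroup B'] (e : B ≃+ B') (n : ℕ) :
    {x : B // n • x = 0} ≃ {y : B' // n • y = 0} :=
  e.toEquiv.subtypeEquiv (fun x => by
    constructor
    · intro h
      show n • e x = 0
      rw [← map_nsmul, h, map_zero]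
    · intro h
      apply e.injective
      rw [map_nsmul, map_zero]
      exact h)

theorem nsmul_prod {B C : Type*} [AddCommGroup B] [AddCommGroup C] (n : ℕ) (p : B × C) :
    n • p = (n • p.1, n • p.2) := by
  induction n with
  | zero => simp; rfl
  | succ k ih => rw [succ_nsmul, succ_nsmul, succ_nsmul, ih]; rfl

theorem card_torsion_prod (B : Type*) [AddCommGroup B] (ℓ : ℕ) [NeZero ℓ] :
    Nat.card {x : B × ZMod ℓ // ℓ • x = 0} = Nat.card {b : B // ℓ • b = 0} * ℓ := by
  have key : ∀ x : B × ZMod ℓ, ℓ • x = 0 ↔ ℓ • x.1 = 0 := by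
    intro x
    rw [nsmul_prod, Prod.ext_iff]
    simp [nsmul_zmod_self]
  have e : {x : B × ZMod ℓ // ℓ • x = 0} ≃ {b : B // ℓ • b = 0} × ZMod ℓ :=
    { toFun := fun x => (⟨x.1.1, by rw [← key]; exact x.2⟩, x.1.2)
      invFun := fun bc => ⟨(bc.1.1, bc.2), by rw [key]; exact bc.1.2⟩
      left_inv := fun x => Subtype.ext rfl
      right_inv := fun bc => rfl }
  rw [Nat.card_congr e, Nat.card_prod, Nat.card_zmod]

end step

section final

variable (A : Type*) [AddCommGroup A] [Finite A]

theorem ell_dvd_exponent (ℓ r : ℕ) (hℓ : ℓ.Prime) (hr0 : 0 < r)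
    (hr : Nat.card {a : A // ℓ • a = 0} = ℓ ^ r) : ℓ ∣ AddMonoid.exponent A := by
  have h1 : 1 < Nat.card {a : A // ℓ • a = 0} := by
    rw [hr]
    exact Nat.one_lt_pow (by omega) hℓ.one_lt
  haveI : Nontrivial {a : A // ℓ • a = 0} := Finite.one_lt_card_iff_nontrivial.mp h1
  obtain ⟨x, hx⟩ := exists_ne (⟨0, by simp⟩ : {a : A // ℓ • a = 0})
  have hx0 : x.1 ≠ 0 := fun h => hx (Subtype.ext h)
  have hord : addOrderOf x.1 ∣ ℓ := addOrderOf_dvd_of_nsmul_eq_zero x.2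
  have : addOrderOf x.1 = ℓ := by
    rcases (Nat.dvd_prime hℓ).mp hord with h | h
    · exact absurd (AddMonoid.addOrderOf_eq_one_iff.mp h) hx0
    · exact h
  rw [← this]
  exact AddMonoid.addOrder_dvd_exponent x.1

theorem exponent_prod_pi (ℓ : ℕ) (hdvd : ℓ ∣ AddMonoid.exponent A) (i : ℕ) :
    AddMonoid.exponent (A × (Fin i → ZMod ℓ)) = AddMonoid.exponent A := by
  rw [AddMonoid.exponent_prod]
  have hd : AddMonoid.exponent (Fin i → ZMod ℓ) ∣ ℓ :=
    AddMonoid.exponent_dvd_of_forall_nsmul_eq_zero (fun g => by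
      funext j
      show ℓ • g j = 0
      exact nsmul_zmod_self ℓ (g j))
  exact Nat.dvd_antisymm (Nat.lcm_dvd dvd_rfl (hd.trans hdvd))
    (Nat.dvd_lcm_left _ _)

/-- the structural equivalence `A × (Z/ℓ)^{i+1} ≃+ (A × (Z/ℓ)^i) × Z/ℓ` -/
def snocEquiv (ℓ i : ℕ) :
    (A × (Fin (i + 1) → ZMod ℓ)) ≃+ ((A × (Fin i → ZMod ℓ)) × ZMod ℓ) where
  toFun x := ((x.1, fun j => x.2 j.succ), x.2 0)
  invFun y := (y.1.1, Fin.cons y.2 y.1.2)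
  left_inv x := by
    refine Prod.ext rfl ?_
    exact Fin.cons_self_tail x.2
  right_inv y := by
    refine Prod.ext (Prod.ext rfl ?_) ?_
    · funext j
      simp
    · simp
  map_add' x y := rfl

theorem exp_rec (r k : ℕ) :
    r + k + (k * r + k * (k - 1) / 2) = (k + 1) * r + (k + 1) * ((k + 1) - 1) / 2 := by
  have hm : ∃ m, k * (k - 1) = 2 * m := by
    cases k with
    | zero => exact ⟨0, rfl⟩
    | succ n =>
      obtain ⟨m, hm⟩ := Nat.even_mul_succ_self n
      exact ⟨m, by rw [Nat.succ_sub_one, mul_comm, hm, two_mul]⟩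
  obtain ⟨m, h1⟩ := hm
  have hkk : (k + 1) * ((k + 1) - 1) = 2 * (m + k) := by
    have h2 : (k + 1) * k = k * (k - 1) + 2 * k := by
      cases k with
      | zero => simp
      | succ n => simp only [Nat.succ_sub_one]; ring
    rw [Nat.add_sub_cancel, h2, h1]
    ring
  rw [h1, hkk, Nat.mul_div_cancel_left _ (by norm_num : 0 < 2),
    Nat.mul_div_cancel_left _ (by norm_num : 0 < 2)]
  ring

theorem main_aux (ℓ : ℕ) (hℓ : ℓ.Prime) (r : ℕ) (hr0 : 0 < r)
    (hr : Nat.card {a : A // ℓ • a = 0} = ℓ ^ r) (i : ℕ) :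
    Nat.card {f : (A × (Fin i → ZMod ℓ)) → (A × (Fin i → ZMod ℓ)) →
        ZMod (AddMonoid.exponent A) // AltCond f}
      = ℓ ^ (i * r + i * (i - 1) / 2) *
        Nat.card {f : A → A → ZMod (AddMonoid.exponent A) // AltCond f} := by
  haveI : NeZero ℓ := ⟨hℓ.ne_zero⟩
  set N := AddMonoid.exponent A with hNdef
  have hNdvd : ℓ ∣ N := ell_dvd_exponent A ℓ r hℓ hr0 hr
  have hN0 : N ≠ 0 := AddMonoid.exponent_ne_zero_of_finite
  -- torsion count
  have htor : ∀ j, Nat.card {x : A × (Fin j → ZMod ℓ) // ℓ • x = 0} = ℓ ^ (r + j) := by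
    intro j
    induction j with
    | zero =>
      rw [Nat.add_zero, ← hr]
      exact Nat.card_congr (torsionCongr (AddEquiv.prodUnique (M := A) (N := Fin 0 → ZMod ℓ)) ℓ)
    | succ k ih =>
      rw [Nat.card_congr (torsionCongr (snocEquiv A ℓ k) ℓ),
        card_torsion_prod _ ℓ, ih, ← pow_succ]
      congr 1
  induction i with
  | zero =>
    rw [Nat.card_congr (altCongr (M := ZMod N)
      (AddEquiv.prodUnique (M := A) (N := Fin 0 → ZMod ℓ)))]
    simp
  | succ k ih =>
    rw [Nat.card_congr (altCongr (M := ZMod N) (snocEquiv A ℓ k)),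
      card_alt_step _ ℓ N hℓ hN0 hNdvd, htor k, ih, ← mul_assoc, ← pow_add]
    congr 2
    exact exp_rec r k

end final

end LamAux

/-- For a finite abelian `ℓ`-group `A` of `ℓ`-rank `r ≥ 1` and
`A_{⊕i} = A ⊕ (Z/ℓ)^i`, we have `|Λ(A_{⊕i})| = ℓ^{ir + i(i−1)/2}·|Λ(A)|`,
where `Λ(B)` is the set of alternating bilinear forms on `B` as a
`Z/exp(B)`-module (equivalently, alternating biadditive forms with values in
`Z/exp(B)`). -/
theorem lam_card_add_elementary (ℓ : ℕ) (hℓ : ℓ.Prime)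
    (A : Type*) [AddCommGroup A] [Finite A]
    (hℓgrp : ∀ a : A, ∃ n : ℕ, (ℓ ^ n) • a = 0)
    (r : ℕ) (hr0 : 0 < r)
    (hr : Nat.card {a : A // ℓ • a = 0} = ℓ ^ r)
    (i : ℕ) :
    Nat.card {f : (A × (Fin i → ZMod ℓ)) → (A × (Fin i → ZMod ℓ)) →
        ZMod (AddMonoid.exponent (A × (Fin i → ZMod ℓ))) //
      (∀ x y z, f (x + y) z = f x z + f y z) ∧
      (∀ x y z, f x (y + z) = f x y + f x z) ∧
      (∀ x, f x x = 0)}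
    = ℓ ^ (i * r + i * (i - 1) / 2) *
      Nat.card {f : A → A → ZMod (AddMonoid.exponent A) //
        (∀ x y z, f (x + y) z = f x z + f y z) ∧
        (∀ x y z, f x (y + z) = f x y + f x z) ∧
        (∀ x, f x x = 0)} := by
  have hNdvd : ℓ ∣ AddMonoid.exponent A := LamAux.ell_dvd_exponent A ℓ r hℓ hr0 hr
  have hexp := LamAux.exponent_prod_pi A ℓ hNdvd i
  rw [hexp]
  exact LamAux.main_aux A ℓ hℓ r hr0 hr i
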